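/- Monotonicity of the Sasvi upper bound u_j^+: let y ≠ 0, ‖Xᵀy‖_∞ ≥ λ₁, a = y/λ₁ - θ₁* with θ₁* the dual optimal at λ₁, and ⟨x_j, a⟩ ≥ 0. If a ≠ 0, then u_j^+(λ₂) = ⟨x_j, θ₁*⟩ + ((1/λ₂ - 1/λ₁)/2)[‖x_j^⊥‖₂‖y^⊥‖₂ + ⟨x_j^⊥, y^⊥⟩], and this is monotonically decreasing in λ₂ on (0, λ₁], since ‖x_j^⊥‖₂‖y^⊥‖₂ + ⟨x_j^⊥, y^⊥⟩ ≥ 0 by Cauchy–Schwarz. -/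

import Mathlib

open RealInnerProductSpace

variable {E : Type*} [NormedAddCommGroup E] [InnerProductSpace ℝ E]

theorem sasvi_core (a x y d : E) (t : ℝ) (ht : 0 ≤ t) (ha0 : a ≠ 0)
    (hxa : 0 ≤ ⟪x, a⟫) (hya : 0 ≤ ⟪y, a⟫)
    (hd1 : ⟪a, d⟫ ≤ 0) (hd2 : ‖d‖ ^ 2 ≤ ⟪a, d⟫ + t * ⟪y, d⟫) :
    ⟪x, d⟫ ≤ (t / 2) *
      (‖x - (⟪x, a⟫ / ‖a‖ ^ 2) • a‖ * ‖y - (⟪y, a⟫ / ‖a‖ ^ 2) • a‖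
        + ⟪x - (⟪x, a⟫ / ‖a‖ ^ 2) • a, y - (⟪y, a⟫ / ‖a‖ ^ 2) • a⟫) := by
  have hA : (0:ℝ) < ‖a‖ ^ 2 := pow_pos (norm_pos_iff.mpr ha0) 2
  set A := ‖a‖ ^ 2 with hAdef
  set xp := x - (⟪x, a⟫ / A) • a with hxp
  set yp := y - (⟪y, a⟫ / A) • a with hyp
  set dp := d - (⟪d, a⟫ / A) • a with hdp
  have hAs : ⟪a, a⟫ = A := real_inner_self_eq_norm_sq a
  have hxpa : ⟪xp, a⟫ = 0 := by
    rw [hxp, inner_sub_left, real_inner_smul_left, hAs]; field_simp; ring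
  have hypa : ⟪yp, a⟫ = 0 := by
    rw [hyp, inner_sub_left, real_inner_smul_left, hAs]; field_simp; ring
  have hdpa : ⟪dp, a⟫ = 0 := by
    rw [hdp, inner_sub_left, real_inner_smul_left, hAs]; field_simp; ring
  have hda : ⟪a, d⟫ = ⟪d, a⟫ := real_inner_comm d a
  -- step 1
  have step1 : ⟪x, d⟫ = ⟪xp, dp⟫ + (⟪x, a⟫ / A) * ⟪d, a⟫ := by
    have h : ⟪xp, dp⟫ = ⟪x, d⟫ - (⟪d,a⟫/A) * ⟪x,a⟫ - (⟪x,a⟫/A) * ⟪a,d⟫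
        + (⟪x,a⟫/A) * ((⟪d,a⟫/A) * ⟪a,a⟫) := by
      rw [hxp, hdp]
      simp only [inner_sub_left, inner_sub_right, real_inner_smul_left, real_inner_smul_right]
      ring
    rw [h, hAs, hda]; field_simp; ring
  -- step 2 : ‖dp‖^2 ≤ t * ⟪yp, dp⟫
  have hdpn : ‖dp‖ ^ 2 = ‖d‖ ^ 2 - ⟪d, a⟫ ^ 2 / A := by
    have h := norm_sub_sq_real d ((⟪d, a⟫ / A) • a)
    rw [norm_smul, real_inner_smul_right, Real.norm_eq_abs] at h
    rw [hdp, h, mul_pow, sq_abs]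
    field_simp
    rw [← hAdef]
    ring
  have hypd : ⟪yp, dp⟫ = ⟪y, d⟫ - (⟪y,a⟫/A) * ⟪d,a⟫ := by
    have h1 : ⟪yp, dp⟫ = ⟪yp, d⟫ - (⟪d,a⟫/A) * ⟪yp, a⟫ := by
      rw [hdp, inner_sub_right, real_inner_smul_right]
    rw [h1, hypa, hyp, inner_sub_left, real_inner_smul_left, real_inner_comm a d]
    ring
  clear_value xp yp dp
  have step2 : ‖dp‖ ^ 2 ≤ t * ⟪yp, dp⟫ := by
    rw [hdpn, hypd, ← hda]
    have hnn : 0 ≤ t * (⟪y,a⟫/A) := mul_nonneg ht (div_nonneg hya hA.le)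
    have h1 : ⟪a,d⟫ * (1 + t * (⟪y,a⟫/A)) ≤ ⟪a,d⟫ ^ 2 / A := by
      have hl : ⟪a,d⟫ * (1 + t * (⟪y,a⟫/A)) ≤ 0 :=
        mul_nonpos_of_nonpos_of_nonneg hd1 (by linarith)
      have hr : 0 ≤ ⟪a,d⟫ ^ 2 / A := div_nonneg (sq_nonneg _) hA.le
      linarith
    nlinarith [hd2]
  -- step 3
  have cs : ⟪xp, dp - (t/2) • yp⟫ ≤ ‖xp‖ * ‖dp - (t/2) • yp‖ := real_inner_le_norm _ _
  have hball : ‖dp - (t/2) • yp‖ ≤ (t/2) * ‖yp‖ := by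
    have hsq : ‖dp - (t/2) • yp‖ ^ 2 ≤ ((t/2) * ‖yp‖) ^ 2 := by
      have h := norm_sub_sq_real dp ((t/2) • yp)
      rw [norm_smul, real_inner_smul_right, Real.norm_eq_abs,
        abs_of_nonneg (by linarith : (0:ℝ) ≤ t/2)] at h
      have step2' : ‖dp‖ ^ 2 ≤ t * ⟪dp, yp⟫ := by
        rw [← real_inner_comm dp yp]; exact step2
      rw [h]
      nlinarith [step2']
    have h2 : (0:ℝ) ≤ (t/2) * ‖yp‖ := mul_nonneg (by linarith) (norm_nonneg _)
    exact (pow_le_pow_iff_left₀ (norm_nonneg _) h2 two_ne_zero).mp hsq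
  have hxd : ⟪xp, dp⟫ = ⟪xp, dp - (t/2) • yp⟫ + (t/2) * ⟪xp, yp⟫ := by
    rw [inner_sub_right, real_inner_smul_right]; ring
  have key : ⟪xp, dp⟫ ≤ (t/2) * (‖xp‖ * ‖yp‖ + ⟪xp, yp⟫) := by
    have h := mul_le_mul_of_nonneg_left hball (norm_nonneg xp)
    linarith [hxd, cs, h]
  have hlast : (⟪x,a⟫ / A) * ⟪d,a⟫ ≤ 0 :=
    mul_nonpos_of_nonneg_of_nonpos (div_nonneg hxa hA.le) (by rwa [← hda])
  linarith [step1, key, hlast]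

variable {E : Type*} [NormedAddCommGroup E] [InnerProductSpace ℝ E]

theorem sasvi_attain (a x y : E) (t : ℝ) (ht : 0 ≤ t) (ha0 : a ≠ 0) :
    ∃ d : E, ⟪a, d⟫ = 0 ∧ ‖d‖ ^ 2 ≤ t * ⟪y, d⟫ ∧
      ⟪x, d⟫ = (t / 2) *
        (‖x - (⟪x, a⟫ / ‖a‖ ^ 2) • a‖ * ‖y - (⟪y, a⟫ / ‖a‖ ^ 2) • a‖
          + ⟪x - (⟪x, a⟫ / ‖a‖ ^ 2) • a, y - (⟪y, a⟫ / ‖a‖ ^ 2) • a⟫) := by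
  have hA : (0:ℝ) < ‖a‖ ^ 2 := pow_pos (norm_pos_iff.mpr ha0) 2
  set A := ‖a‖ ^ 2 with hAdef
  set xp := x - (⟪x, a⟫ / A) • a with hxp
  set yp := y - (⟪y, a⟫ / A) • a with hyp
  have hAs : ⟪a, a⟫ = A := real_inner_self_eq_norm_sq a
  have hxpa : ⟪a, xp⟫ = 0 := by
    rw [hxp, inner_sub_right, real_inner_smul_right, hAs, real_inner_comm a x]; field_simp; ring
  have hypa : ⟪a, yp⟫ = 0 := by
    rw [hyp, inner_sub_right, real_inner_smul_right, hAs, real_inner_comm a y]; field_simp; ring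
  have hysplit : y = yp + (⟪y, a⟫ / A) • a := by rw [hyp]; abel
  have hxsplit : x = xp + (⟪x, a⟫ / A) • a := by rw [hxp]; abel
  clear_value xp yp
  obtain ⟨u, hua, hxpu, hun⟩ : ∃ u : E, ⟪a, u⟫ = 0 ∧ ⟪xp, u⟫ = ‖xp‖ ∧ ‖u‖ ≤ 1 := by
    by_cases h : xp = 0
    · exact ⟨0, by simp, by simp [h], by simp⟩
    · refine ⟨‖xp‖⁻¹ • xp, ?_, ?_, ?_⟩
      · rw [real_inner_smul_right, hxpa]; ring
      · rw [real_inner_smul_right, real_inner_self_eq_norm_sq]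
        rw [sq, ← mul_assoc, inv_mul_cancel₀ (norm_ne_zero_iff.mpr h), one_mul]
      · rw [norm_smul, Real.norm_eq_abs, abs_of_nonneg (inv_nonneg.mpr (norm_nonneg _)),
          inv_mul_cancel₀ (norm_ne_zero_iff.mpr h)]
  set d : E := (t/2) • (yp + ‖yp‖ • u) with hd
  have had : ⟪a, d⟫ = 0 := by
    rw [hd, real_inner_smul_right, inner_add_right, real_inner_smul_right, hypa, hua]
    ring
  have hypd : ⟪yp, d⟫ = (t/2) * (‖yp‖^2 + ‖yp‖ * ⟪yp, u⟫) := by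
    rw [hd, real_inner_smul_right, inner_add_right, real_inner_smul_right,
      real_inner_self_eq_norm_sq]
  have hxpd : ⟪xp, d⟫ = (t/2) * (⟪xp, yp⟫ + ‖yp‖ * ‖xp‖) := by
    rw [hd, real_inner_smul_right, inner_add_right, real_inner_smul_right, hxpu]
  have hyd : ⟪y, d⟫ = ⟪yp, d⟫ := by
    conv_lhs => rw [hysplit]
    rw [inner_add_left, real_inner_smul_left, had]
    ring
  have hxd : ⟪x, d⟫ = ⟪xp, d⟫ := by
    conv_lhs => rw [hxsplit]
    rw [inner_add_left, real_inner_smul_left, had]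
    ring
  have hnd : ‖d‖ ^ 2 = (t/2)^2 * (‖yp‖^2 + 2 * (‖yp‖ * ⟪yp, u⟫) + ‖yp‖^2 * ‖u‖^2) := by
    rw [hd, norm_smul, mul_pow, Real.norm_eq_abs, sq_abs, norm_add_sq_real,
      real_inner_smul_right, norm_smul, Real.norm_eq_abs, abs_of_nonneg (norm_nonneg _),
      mul_pow]
  refine ⟨d, had, ?_, ?_⟩
  · rw [hnd, hyd, hypd]
    have hu2 : ‖u‖^2 ≤ 1 := by nlinarith [norm_nonneg u]
    have husq : ‖yp‖^2 * ‖u‖^2 ≤ ‖yp‖^2 := by nlinarith [sq_nonneg ‖yp‖]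
    nlinarith [sq_nonneg t]
  · rw [hxd, hxpd]; ring


theorem stmt_19 {n p : ℕ} (X : Fin p → EuclideanSpace ℝ (Fin n))
    (y : EuclideanSpace ℝ (Fin n)) (hy : y ≠ 0) (lmax : ℝ)
    (hlmax : IsGreatest (Set.range fun j => |(⟪X j, y⟫)|) lmax)
    (lam1 : ℝ) (hlam1 : 0 < lam1) (hlam1le : lam1 ≤ lmax)
    (θ1 : EuclideanSpace ℝ (Fin n))
    (hθ1mem : ∀ j, |(⟪X j, θ1⟫)| ≤ 1)
    (hθ1opt : ∀ θ : EuclideanSpace ℝ (Fin n), (∀ j, |(⟪X j, θ⟫)| ≤ 1) →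
      ‖θ1 - (1 / lam1) • y‖ ≤ ‖θ - (1 / lam1) • y‖)
    (a : EuclideanSpace ℝ (Fin n)) (ha : a = (1 / lam1) • y - θ1) (ha0 : a ≠ 0)
    (j : Fin p) (hj : X j ≠ 0) (hja : ⟪X j, a⟫ ≥ 0) :
    (∀ lam2 ∈ Set.Ioo 0 lam1,
      IsGreatest {v : ℝ | ∃ θ : EuclideanSpace ℝ (Fin n),
          (⟪θ1 - (1 / lam1) • y, θ - θ1⟫ ≥ 0 ∧ ⟪θ - (1 / lam2) • y, θ1 - θ⟫ ≥ 0) ∧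
          v = ⟪X j, θ⟫}
        (⟪X j, θ1⟫ + ((1 / lam2 - 1 / lam1) / 2) *
          (‖X j - (⟪X j, a⟫ / ‖a‖ ^ 2) • a‖ * ‖y - (⟪y, a⟫ / ‖a‖ ^ 2) • a‖
            + ⟪X j - (⟪X j, a⟫ / ‖a‖ ^ 2) • a, y - (⟪y, a⟫ / ‖a‖ ^ 2) • a⟫))) ∧
    AntitoneOn (fun lam2 : ℝ => ⟪X j, θ1⟫ + ((1 / lam2 - 1 / lam1) / 2) *
        (‖X j - (⟪X j, a⟫ / ‖a‖ ^ 2) • a‖ * ‖y - (⟪y, a⟫ / ‖a‖ ^ 2) • a‖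
          + ⟪X j - (⟪X j, a⟫ / ‖a‖ ^ 2) • a, y - (⟪y, a⟫ / ‖a‖ ^ 2) • a⟫))
      (Set.Ioc 0 lam1) ∧
    ‖X j - (⟪X j, a⟫ / ‖a‖ ^ 2) • a‖ * ‖y - (⟪y, a⟫ / ‖a‖ ^ 2) • a‖
      + ⟪X j - (⟪X j, a⟫ / ‖a‖ ^ 2) • a, y - (⟪y, a⟫ / ‖a‖ ^ 2) • a⟫ ≥ 0 := by
  have hb : θ1 - (1 / lam1) • y = -a := by rw [ha]; abel
  -- variational inequality at θ = 0 direction: ⟪a, θ1⟫ ≥ 0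
  have haθ1 : 0 ≤ ⟪a, θ1⟫ := by
    by_contra hneg
    push_neg at hneg
    have hθ1ne : θ1 ≠ 0 := by rintro rfl; simp at hneg
    have hN : (0:ℝ) < ‖θ1‖ ^ 2 := pow_pos (norm_pos_iff.mpr hθ1ne) 2
    set τ := min 1 (-⟪a, θ1⟫ / ‖θ1‖ ^ 2) with hτ
    have hτpos : 0 < τ := lt_min one_pos (div_pos (neg_pos.mpr hneg) hN)
    have hτ1 : τ ≤ 1 := min_le_left _ _
    have hτ2 : τ * ‖θ1‖ ^ 2 ≤ -⟪a, θ1⟫ := by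
      have h := min_le_right 1 (-⟪a, θ1⟫ / ‖θ1‖ ^ 2)
      have h2 : (-⟪a, θ1⟫ / ‖θ1‖ ^ 2) * ‖θ1‖ ^ 2 = -⟪a, θ1⟫ := by field_simp
      nlinarith
    have hfeas : ∀ i, |(⟪X i, (1 - τ) • θ1⟫)| ≤ 1 := by
      intro i
      rw [real_inner_smul_right, abs_mul, abs_of_nonneg (by linarith : (0:ℝ) ≤ 1 - τ)]
      calc (1 - τ) * |(⟪X i, θ1⟫)| ≤ 1 * 1 :=
            mul_le_mul (by linarith) (hθ1mem i) (abs_nonneg _) one_pos.le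
        _ = 1 := one_mul 1
    have hopt := hθ1opt _ hfeas
    have h2 : (1 - τ) • θ1 - (1 / lam1) • y = -(a + τ • θ1) := by
      rw [ha]; module
    rw [hb, h2, norm_neg, norm_neg] at hopt
    have hsq : ‖a‖ ^ 2 ≤ ‖a + τ • θ1‖ ^ 2 := by
      nlinarith [norm_nonneg (a + τ • θ1), norm_nonneg a]
    rw [norm_add_sq_real, real_inner_smul_right, norm_smul, Real.norm_eq_abs,
      abs_of_nonneg hτpos.le, mul_pow] at hsq
    nlinarith
  have hya : 0 ≤ ⟪y, a⟫ := by
    have h : ⟪a, a⟫ = (1 / lam1) * ⟪y, a⟫ - ⟪θ1, a⟫ := by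
      nth_rewrite 1 [ha]
      rw [inner_sub_left, real_inner_smul_left]
    have h2 : ⟪θ1, a⟫ = ⟪a, θ1⟫ := real_inner_comm a θ1
    have h3 : ⟪a, a⟫ = ‖a‖ ^ 2 := real_inner_self_eq_norm_sq a
    have h4 : 0 ≤ (1 / lam1) * ⟪y, a⟫ := by nlinarith [sq_nonneg ‖a‖]
    have h5 : 0 < 1 / lam1 := by positivity
    nlinarith
  have hM : ‖X j - (⟪X j, a⟫ / ‖a‖ ^ 2) • a‖ * ‖y - (⟪y, a⟫ / ‖a‖ ^ 2) • a‖
      + ⟪X j - (⟪X j, a⟫ / ‖a‖ ^ 2) • a, y - (⟪y, a⟫ / ‖a‖ ^ 2) • a⟫ ≥ 0 := by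
    have h := abs_real_inner_le_norm (X j - (⟪X j, a⟫ / ‖a‖ ^ 2) • a)
      (y - (⟪y, a⟫ / ‖a‖ ^ 2) • a)
    have h2 := abs_le.mp h
    linarith [h2.1]
  refine ⟨?_, ?_, hM⟩
  · intro lam2 hlam2
    obtain ⟨hl2pos, hl2lt⟩ := hlam2
    set t := 1 / lam2 - 1 / lam1 with htdef
    have ht : 0 < t := by
      have h := one_div_lt_one_div_of_lt hl2pos hl2lt
      rw [htdef]; linarith
    have hexp : ∀ d' : EuclideanSpace ℝ (Fin n),
        ⟪d' - a - t • y, -d'⟫ = -(‖d'‖ ^ 2) + ⟪a, d'⟫ + t * ⟪y, d'⟫ := by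
      intro d'
      rw [inner_neg_right, inner_sub_left, inner_sub_left, real_inner_smul_left,
        real_inner_self_eq_norm_sq]
      ring
    constructor
    · -- membership
      obtain ⟨d, hda, hdb, hdv⟩ := sasvi_attain a (X j) y t ht.le ha0
      refine ⟨θ1 + d, ⟨?_, ?_⟩, ?_⟩
      · have hds : θ1 + d - θ1 = d := by abel
        rw [hb, hds, inner_neg_left, hda, neg_zero]
      · have hsplit : (θ1 + d) - (1 / lam2) • y = d - a - t • y := by
          rw [ha, htdef]; module
        have hsub : θ1 - (θ1 + d) = -d := by abel
        rw [hsplit, hsub, hexp d, hda]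
        linarith [hdb]
      · rw [inner_add_right, hdv]
    · -- upper bound
      rintro v ⟨θ, ⟨hc1, hc2⟩, rfl⟩
      have hd1 : ⟪a, θ - θ1⟫ ≤ 0 := by
        rw [hb, inner_neg_left] at hc1
        linarith
      have hd2 : ‖θ - θ1‖ ^ 2 ≤ ⟪a, θ - θ1⟫ + t * ⟪y, θ - θ1⟫ := by
        have hsplit : θ - (1 / lam2) • y = (θ - θ1) - a - t • y := by
          rw [ha, htdef]; module
        have hsub : θ1 - θ = -(θ - θ1) := by abel
        rw [hsplit, hsub, hexp (θ - θ1)] at hc2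
        linarith
      have hkey := sasvi_core a (X j) y (θ - θ1) t ht.le ha0 hja hya hd1 hd2
      have hθs : ⟪X j, θ⟫ = ⟪X j, θ1⟫ + ⟪X j, θ - θ1⟫ := by
        rw [inner_sub_right]; ring
      linarith
  · -- antitone
    intro b hb' c hc hbc
    simp only
    have h1 : 1 / c ≤ 1 / b := one_div_le_one_div_of_le hb'.1 hbc
    have h2 := mul_le_mul_of_nonneg_right (by linarith : (1 / c - 1 / lam1) / 2 ≤ (1 / b - 1 / lam1) / 2) hM
    linarith
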